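/- If the fundamental tensor F satisfies the defining condition of class F₇, then the torsion tensor of the second natural connection is T²(x,y,z) = (F(y,φx,ξ) − F(x,φy,ξ)) η(z) for all x, y, z ∈ V (that is, T² = dη ⊗ η, where dη(x,y) = F(y,φx,ξ) − F(x,φy,ξ) is the exterior derivative of η expressed through F). -/
import Mathlib


open scoped RealInnerProductSpace

noncomputable section

variable {V : Type*} [NormedAddCommGroup V] [InnerProductSpace ℝ V]

/-- A Riemannian Π-structure on a real inner product space `V`:
a linear map `phi`, a vector `xi` (with dual form `η x = ⟪x, xi⟫`) satisfying
the defining algebraic identities. -/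
structure PiStruct (V : Type*) [NormedAddCommGroup V] [InnerProductSpace ℝ V] where
  phi : V →ₗ[ℝ] V
  xi : V
  phi_xi : phi xi = 0
  phi_phi : ∀ x : V, phi (phi x) = x - (⟪x, xi⟫ : ℝ) • xi
  eta_phi : ∀ x : V, ⟪phi x, xi⟫ = 0
  eta_xi : ⟪xi, xi⟫ = (1 : ℝ)
  g_phi_phi : ∀ x y : V, ⟪phi x, phi y⟫ = ⟪x, y⟫ - ⟪x, xi⟫ * ⟪y, xi⟫
  g_phi_symm : ∀ x y : V, ⟪phi x, y⟫ = ⟪x, phi y⟫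

/-- Trilinear real-valued maps on `V`. -/
abbrev Tri (V : Type*) [NormedAddCommGroup V] [InnerProductSpace ℝ V] :=
  V →ₗ[ℝ] V →ₗ[ℝ] V →ₗ[ℝ] ℝ

/-- The 1-form `η(x) = g(x, ξ)`. -/
def PiStruct.eta (P : PiStruct V) (x : V) : ℝ := ⟪x, P.xi⟫

/-- `F` is a fundamental tensor for the Π-structure `P`. -/
def IsFund (P : PiStruct V) (F : Tri V) : Prop :=
  (∀ x y z : V, F x y z = F x z y) ∧
  (∀ x y z : V, F x y z =
    -F x (P.phi y) (P.phi z) + P.eta y * F x P.xi z + P.eta z * F x y P.xi)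

/-- The Nijenhuis tensor of `F`. -/
def Nij (P : PiStruct V) (F : Tri V) (x y z : V) : ℝ :=
  F (P.phi x) y z - F (P.phi y) x z - F x y (P.phi z) + F y x (P.phi z)
    + P.eta z * (F x (P.phi y) P.xi - F y (P.phi x) P.xi)

/-- The potential of the first natural connection. -/
def Q1 (P : PiStruct V) (F : Tri V) (x y z : V) : ℝ :=
  -(1/2) * F x (P.phi y) z - (1/2) * P.eta z * F x (P.phi y) P.xi
    + P.eta y * F x (P.phi z) P.xi

/-- The potential of the second natural connection. -/
def Q2 (P : PiStruct V) (F : Tri V) (x y z : V) : ℝ :=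
  Q1 P F x y z - (1/8) * (Nij P F (P.phi (P.phi z)) (P.phi (P.phi y)) (P.phi (P.phi x))
    + 2 * P.eta x * Nij P F (P.phi z) (P.phi y) P.xi)

/-- The torsion tensor of the first natural connection. -/
def T1 (P : PiStruct V) (F : Tri V) (x y z : V) : ℝ :=
  -(1/2) * (F x (P.phi y) z - F y (P.phi x) z)
    - (1/2) * P.eta z * (F x (P.phi y) P.xi - F y (P.phi x) P.xi)
    + P.eta y * F x (P.phi z) P.xi - P.eta x * F y (P.phi z) P.xi

/-- The torsion tensor of the second natural connection. -/
def T2 (P : PiStruct V) (F : Tri V) (x y z : V) : ℝ :=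
  Q2 P F x y z - Q2 P F y x z

/-- Identity (*) for a torsion-like tensor `T`. -/
def StarId (P : PiStruct V) (T : V → V → V → ℝ) : Prop :=
  ∀ x y z : V,
    T x y z + T y z x + T (P.phi x) y (P.phi z) + T y (P.phi z) (P.phi x)
    - P.eta x * (T P.xi y z + T y z P.xi - P.eta y * T P.xi z P.xi)
    - P.eta y * (T x P.xi z + T P.xi z x + T (P.phi x) P.xi (P.phi z)
        + T P.xi (P.phi z) (P.phi x))
    - P.eta z * (T x y P.xi + T y P.xi x - P.eta y * T x P.xi P.xi) = 0

/-- The defining condition of the basic class F₇. -/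
def ClassF7 (P : PiStruct V) (F : Tri V) : Prop :=
  (∀ x y z : V, F x y z = F x y P.xi * P.eta z + F x z P.xi * P.eta y) ∧
  (∀ x y : V, F x y P.xi = -F y x P.xi) ∧
  (∀ x y : V, F x y P.xi = F (P.phi x) (P.phi y) P.xi)

/-- in the class F₇ the torsion of the second natural connection is
`T²(x,y,z) = (F(y,φx,ξ) − F(x,φy,ξ)) η(z)`, i.e. `T² = dη ⊗ η`. -/
theorem classF7_T2_formula
    [FiniteDimensional ℝ V] (n : ℕ) (hn : 1 ≤ n)
    (hdim : Module.finrank ℝ V = 2 * n + 1)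
    (P : PiStruct V) (F : Tri V) (hF : IsFund P F)
    (h7 : ClassF7 P F) :
    ∀ x y z : V, T2 P F x y z =
      (F y (P.phi x) P.xi - F x (P.phi y) P.xi) * P.eta z := by
  obtain ⟨h1, h2, h3⟩ := h7
  have heφ : ∀ w : V, P.eta (P.phi w) = 0 := P.eta_phi
  have heξ : P.eta P.xi = 1 := P.eta_xi
  have hAξ : ∀ w : V, F w P.xi P.xi = 0 := by
    intro w; rw [h3 w P.xi, P.phi_xi]; simp
  have hAξ' : ∀ w : V, F P.xi w P.xi = 0 := by
    intro w; rw [h2, hAξ]; ring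
  have hAswap : ∀ a b : V, F (P.phi a) b P.xi = F a (P.phi b) P.xi := by
    intro a b
    rw [h3 (P.phi a) b, P.phi_phi a]
    simp [hAξ', PiStruct.eta]
  have hred : ∀ a b : V, F a (P.phi (P.phi b)) P.xi = F a b P.xi := by
    intro a b
    rw [P.phi_phi b]
    simp [hAξ, PiStruct.eta]
  have hF0 : ∀ a b c : V, P.eta b = 0 → P.eta c = 0 → F a b c = 0 := by
    intro a b c hb hc
    rw [h1 a b c, hb, hc]; ring
  have hN0 : ∀ a b c : V,
      Nij P F (P.phi (P.phi c)) (P.phi (P.phi b)) (P.phi (P.phi a)) = 0 := by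
    intro a b c
    unfold Nij
    rw [hF0 _ _ _ (heφ _) (heφ _), hF0 _ _ _ (heφ _) (heφ _),
        hF0 _ _ _ (heφ _) (heφ _), hF0 _ _ _ (heφ _) (heφ _), heφ]
    ring
  have hNxi : ∀ b c : V, Nij P F (P.phi c) (P.phi b) P.xi
      = 2 * F (P.phi c) b P.xi - 2 * F (P.phi b) c P.xi := by
    intro b c
    unfold Nij
    rw [P.phi_xi]
    simp only [map_zero, LinearMap.zero_apply, heξ]
    rw [hAswap (P.phi c) (P.phi b), hAswap (P.phi b) (P.phi c)]
    simp only [hred]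
    ring
  have hQ1 : ∀ a b c : V, Q1 P F a b c
      = -(F a (P.phi b) P.xi) * P.eta c + P.eta b * F a (P.phi c) P.xi := by
    intro a b c
    unfold Q1
    rw [h1 a (P.phi b) c, heφ]
    ring
  have key : ∀ a b c : V, Q2 P F a b c
      = -(F a (P.phi b) P.xi) * P.eta c + P.eta b * F a (P.phi c) P.xi
        - (1/2) * P.eta a * (F (P.phi c) b P.xi - F (P.phi b) c P.xi) := by
    intro a b c
    unfold Q2
    rw [hQ1, hN0, hNxi]
    ring
  intro x y z
  unfold T2
  rw [key, key, h2 (P.phi z) x, h2 (P.phi z) y, hAswap x z, hAswap y z]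
  ring
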